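/- Let F be a field, L a 2×4 matrix over F of rank 2, and H a 3×4 matrix over F of rank 3. Then the row span of L is contained in the row span of H if and only if the four expressions ℓ₁₂h₁₃₄ − ℓ₁₃h₁₂₄ + ℓ₁₄h₁₂₃, ℓ₁₂h₂₃₄ − ℓ₂₃h₁₂₄ + ℓ₂₄h₁₂₃, ℓ₁₃h₂₃₄ − ℓ₂₃h₁₃₄ + ℓ₃₄h₁₂₃, and ℓ₁₄h₂₃₄ − ℓ₂₄h₁₃₄ + ℓ₃₄h₁₂₄ all vanish. -/

import Mathlib

open Matrix Finset

lemma det_fin_four' {R : Type*} [CommRing R] (A : Matrix (Fin 4) (Fin 4) R) :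
    det A =
      A 0 0 * A 1 1 * A 2 2 * A 3 3 - A 0 0 * A 1 1 * A 2 3 * A 3 2
      - A 0 0 * A 1 2 * A 2 1 * A 3 3 + A 0 0 * A 1 2 * A 2 3 * A 3 1
      + A 0 0 * A 1 3 * A 2 1 * A 3 2 - A 0 0 * A 1 3 * A 2 2 * A 3 1
      - A 0 1 * A 1 0 * A 2 2 * A 3 3 + A 0 1 * A 1 0 * A 2 3 * A 3 2
      + A 0 1 * A 1 2 * A 2 0 * A 3 3 - A 0 1 * A 1 2 * A 2 3 * A 3 0
      - A 0 1 * A 1 3 * A 2 0 * A 3 2 + A 0 1 * A 1 3 * A 2 2 * A 3 0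
      + A 0 2 * A 1 0 * A 2 1 * A 3 3 - A 0 2 * A 1 0 * A 2 3 * A 3 1
      - A 0 2 * A 1 1 * A 2 0 * A 3 3 + A 0 2 * A 1 1 * A 2 3 * A 3 0
      + A 0 2 * A 1 3 * A 2 0 * A 3 1 - A 0 2 * A 1 3 * A 2 1 * A 3 0
      - A 0 3 * A 1 0 * A 2 1 * A 3 2 + A 0 3 * A 1 0 * A 2 2 * A 3 1
      + A 0 3 * A 1 1 * A 2 0 * A 3 2 - A 0 3 * A 1 1 * A 2 2 * A 3 0
      - A 0 3 * A 1 2 * A 2 0 * A 3 1 + A 0 3 * A 1 2 * A 2 1 * A 3 0 := by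
  rw [det_succ_row_zero]
  simp only [Fin.sum_univ_four, det_fin_three, submatrix_apply,
    show (Fin.succ 0 : Fin 4) = 1 from rfl, show (Fin.succ 1 : Fin 4) = 2 from rfl,
    show (Fin.succ 2 : Fin 4) = 3 from rfl,
    show Fin.succAbove ((0:Fin 4)) (0:Fin 3) = 1 from by decide,
    show Fin.succAbove ((0:Fin 4)) (1:Fin 3) = 2 from by decide,
    show Fin.succAbove ((0:Fin 4)) (2:Fin 3) = 3 from by decide,
    show Fin.succAbove ((1:Fin 4)) (0:Fin 3) = 0 from by decide,
    show Fin.succAbove ((1:Fin 4)) (1:Fin 3) = 2 from by decide,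
    show Fin.succAbove ((1:Fin 4)) (2:Fin 3) = 3 from by decide,
    show Fin.succAbove ((2:Fin 4)) (0:Fin 3) = 0 from by decide,
    show Fin.succAbove ((2:Fin 4)) (1:Fin 3) = 1 from by decide,
    show Fin.succAbove ((2:Fin 4)) (2:Fin 3) = 3 from by decide,
    show Fin.succAbove ((3:Fin 4)) (0:Fin 3) = 0 from by decide,
    show Fin.succAbove ((3:Fin 4)) (1:Fin 3) = 1 from by decide,
    show Fin.succAbove ((3:Fin 4)) (2:Fin 3) = 2 from by decide,
    show ((0:Fin 4):ℕ) = 0 from rfl, show ((1:Fin 4):ℕ) = 1 from rfl,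
    show ((2:Fin 4):ℕ) = 2 from rfl, show ((3:Fin 4):ℕ) = 3 from rfl]
  ring

noncomputable def cvec {F : Type*} [Field F] (H : Matrix (Fin 3) (Fin 4) F) : Fin 4 → F :=
  ![(H.submatrix id ![1,2,3]).det, -(H.submatrix id ![0,2,3]).det,
    (H.submatrix id ![0,1,3]).det, -(H.submatrix id ![0,1,2]).det]

lemma dot_cvec {F : Type*} [Field F] (H : Matrix (Fin 3) (Fin 4) F) (x : Fin 4 → F) :
    x ⬝ᵥ cvec H = (Matrix.of ![x, H 0, H 1, H 2]).det := by
  rw [det_fin_four']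
  simp [cvec, dotProduct, Fin.sum_univ_four, Matrix.det_fin_three]
  ring

lemma row_dot_cvec {F : Type*} [Field F] (H : Matrix (Fin 3) (Fin 4) F) (i : Fin 3) :
    H i ⬝ᵥ cvec H = 0 := by
  rw [dot_cvec]
  fin_cases i
  · exact Matrix.det_zero_of_row_eq (i := 0) (j := 1) (by decide) rfl
  · exact Matrix.det_zero_of_row_eq (i := 0) (j := 2) (by decide) rfl
  · exact Matrix.det_zero_of_row_eq (i := 0) (j := 3) (by decide) rfl

noncomputable def phiH {F : Type*} [Field F] (H : Matrix (Fin 3) (Fin 4) F) :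
    (Fin 4 → F) →ₗ[F] F where
  toFun x := x ⬝ᵥ cvec H
  map_add' x y := add_dotProduct x y (cvec H)
  map_smul' t x := by simp [smul_dotProduct]

lemma span_eq_ker {F : Type*} [Field F] (H : Matrix (Fin 3) (Fin 4) F) (hH : H.rank = 3) :
    Submodule.span F (Set.range fun i : Fin 3 => H i) = LinearMap.ker (phiH H) := by
  have hfin : Module.finrank F (Submodule.span F (Set.range fun i : Fin 3 => H i)) = 3 := by
    exact (Matrix.rank_eq_finrank_span_row H).symm.trans hH
  have hle : Submodule.span F (Set.range fun i : Fin 3 => H i) ≤ LinearMap.ker (phiH H) := by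
    rw [Submodule.span_le]
    rintro _ ⟨i, rfl⟩
    exact LinearMap.mem_ker.mpr (row_dot_cvec H i)
  have hind : LinearIndependent F (fun i : Fin 3 => H i) := by
    rw [linearIndependent_iff_card_eq_finrank_span]
    simp [Set.finrank, hfin]
  have hne : Submodule.span F (Set.range fun i : Fin 3 => H i) ≠ ⊤ := by
    intro h
    rw [h, finrank_top, Module.finrank_fin_fun] at hfin
    omega
  obtain ⟨x, hx⟩ : ∃ x, x ∉ Submodule.span F (Set.range fun i : Fin 3 => H i) := by
    by_contra h
    push_neg at h
    exact hne (Submodule.eq_top_iff'.mpr h)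
  have hind4 : LinearIndependent F (Fin.cons x (fun i : Fin 3 => H i) : Fin 4 → Fin 4 → F) :=
    (linearIndependent_fin_cons).mpr ⟨hind, hx⟩
  have hdet : (Matrix.of ![x, H 0, H 1, H 2]).det ≠ 0 := by
    have hrows : LinearIndependent F (fun i => (Matrix.of ![x, H 0, H 1, H 2]) i) := by
      have : (fun i => (Matrix.of ![x, H 0, H 1, H 2]) i)
          = (Fin.cons x (fun i : Fin 3 => H i) : Fin 4 → Fin 4 → F) := by
        funext i; fin_cases i <;> rfl
      rw [this]; exact hind4
    have := Matrix.isUnit_iff_isUnit_det _ |>.mp (Matrix.linearIndependent_rows_iff_isUnit.mp hrows)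
    exact this.ne_zero
  have hphix : phiH H x ≠ 0 := by
    show x ⬝ᵥ cvec H ≠ 0
    rw [dot_cvec]; exact hdet
  have hsurj : Function.Surjective (phiH H) := by
    intro y
    refine ⟨(y / phiH H x) • x, ?_⟩
    rw [_root_.map_smul, smul_eq_mul, div_mul_cancel₀ y hphix]
  have hker : Module.finrank F (LinearMap.ker (phiH H)) = 3 := by
    have h1 := LinearMap.finrank_range_add_finrank_ker (phiH H)
    rw [LinearMap.range_eq_top.mpr hsurj, finrank_top, Module.finrank_self,
      Module.finrank_fin_fun] at h1
    omega
  exact Submodule.eq_of_le_of_finrank_le hle (by rw [hker, hfin])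

/-- Let `F` be a field, `L` a 2×4 matrix over `F` of rank 2, and
`H` a 3×4 matrix over `F` of rank 3.  Then the row span of `L` is contained in
the row span of `H` if and only if the four expressions
`ℓ₁₂h₁₃₄ − ℓ₁₃h₁₂₄ + ℓ₁₄h₁₂₃`, `ℓ₁₂h₂₃₄ − ℓ₂₃h₁₂₄ + ℓ₂₄h₁₂₃`,
`ℓ₁₃h₂₃₄ − ℓ₂₃h₁₃₄ + ℓ₃₄h₁₂₃`, and `ℓ₁₄h₂₃₄ − ℓ₂₄h₁₃₄ + ℓ₃₄h₁₂₄` all vanish. -/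
theorem line_in_plane_iff {F : Type*} [Field F] (L : Matrix (Fin 2) (Fin 4) F)
    (hL : L.rank = 2) (H : Matrix (Fin 3) (Fin 4) F) (hH : H.rank = 3) :
    Submodule.span F (Set.range fun i : Fin 2 => L i)
        ≤ Submodule.span F (Set.range fun i : Fin 3 => H i) ↔
      ((L.submatrix id ![0, 1]).det * (H.submatrix id ![0, 2, 3]).det
          - (L.submatrix id ![0, 2]).det * (H.submatrix id ![0, 1, 3]).det
          + (L.submatrix id ![0, 3]).det * (H.submatrix id ![0, 1, 2]).det = 0
        ∧ (L.submatrix id ![0, 1]).det * (H.submatrix id ![1, 2, 3]).det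
          - (L.submatrix id ![1, 2]).det * (H.submatrix id ![0, 1, 3]).det
          + (L.submatrix id ![1, 3]).det * (H.submatrix id ![0, 1, 2]).det = 0
        ∧ (L.submatrix id ![0, 2]).det * (H.submatrix id ![1, 2, 3]).det
          - (L.submatrix id ![1, 2]).det * (H.submatrix id ![0, 2, 3]).det
          + (L.submatrix id ![2, 3]).det * (H.submatrix id ![0, 1, 2]).det = 0
        ∧ (L.submatrix id ![0, 3]).det * (H.submatrix id ![1, 2, 3]).det
          - (L.submatrix id ![1, 3]).det * (H.submatrix id ![0, 2, 3]).det
          + (L.submatrix id ![2, 3]).det * (H.submatrix id ![0, 1, 3]).det = 0) := by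

  have e0 : (L.submatrix id ![0, 1]).det * (H.submatrix id ![0, 2, 3]).det
      - (L.submatrix id ![0, 2]).det * (H.submatrix id ![0, 1, 3]).det
      + (L.submatrix id ![0, 3]).det * (H.submatrix id ![0, 1, 2]).det
      = L 1 0 * (L 0 ⬝ᵥ cvec H) - L 0 0 * (L 1 ⬝ᵥ cvec H) := by
    simp [cvec, dotProduct, Fin.sum_univ_four, Matrix.det_fin_two, Matrix.det_fin_three]
    ring
  have e1 : (L.submatrix id ![0, 1]).det * (H.submatrix id ![1, 2, 3]).det
      - (L.submatrix id ![1, 2]).det * (H.submatrix id ![0, 1, 3]).det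
      + (L.submatrix id ![1, 3]).det * (H.submatrix id ![0, 1, 2]).det
      = L 1 1 * (L 0 ⬝ᵥ cvec H) - L 0 1 * (L 1 ⬝ᵥ cvec H) := by
    simp [cvec, dotProduct, Fin.sum_univ_four, Matrix.det_fin_two, Matrix.det_fin_three]
    ring
  have e2 : (L.submatrix id ![0, 2]).det * (H.submatrix id ![1, 2, 3]).det
      - (L.submatrix id ![1, 2]).det * (H.submatrix id ![0, 2, 3]).det
      + (L.submatrix id ![2, 3]).det * (H.submatrix id ![0, 1, 2]).det
      = L 1 2 * (L 0 ⬝ᵥ cvec H) - L 0 2 * (L 1 ⬝ᵥ cvec H) := by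
    simp [cvec, dotProduct, Fin.sum_univ_four, Matrix.det_fin_two, Matrix.det_fin_three]
    ring
  have e3 : (L.submatrix id ![0, 3]).det * (H.submatrix id ![1, 2, 3]).det
      - (L.submatrix id ![1, 3]).det * (H.submatrix id ![0, 2, 3]).det
      + (L.submatrix id ![2, 3]).det * (H.submatrix id ![0, 1, 3]).det
      = L 1 3 * (L 0 ⬝ᵥ cvec H) - L 0 3 * (L 1 ⬝ᵥ cvec H) := by
    simp [cvec, dotProduct, Fin.sum_univ_four, Matrix.det_fin_two, Matrix.det_fin_three]
    ring
  rw [span_eq_ker H hH]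
  constructor
  · intro h
    have h0 : L 0 ⬝ᵥ cvec H = 0 := h (Submodule.subset_span ⟨0, rfl⟩)
    have h1 : L 1 ⬝ᵥ cvec H = 0 := h (Submodule.subset_span ⟨1, rfl⟩)
    refine ⟨?_, ?_, ?_, ?_⟩
    · rw [e0, h0, h1]; ring
    · rw [e1, h0, h1]; ring
    · rw [e2, h0, h1]; ring
    · rw [e3, h0, h1]; ring
  · rintro ⟨q0, q1, q2, q3⟩
    rw [e0] at q0; rw [e1] at q1; rw [e2] at q2; rw [e3] at q3
    have hLind : LinearIndependent F (fun i : Fin 2 => L i) := by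
      rw [linearIndependent_iff_card_eq_finrank_span]
      rw [Set.finrank, show Module.finrank F (Submodule.span F (Set.range fun i : Fin 2 => L i)) = 2 from (Matrix.rank_eq_finrank_span_row L).symm.trans hL]
      rfl
    have hsum : ∑ i : Fin 2, (![-(L 1 ⬝ᵥ cvec H), L 0 ⬝ᵥ cvec H] i) • L i = 0 := by
      rw [Fin.sum_univ_two]
      funext a
      fin_cases a
      · show -(L 1 ⬝ᵥ cvec H) • L 0 0 + (L 0 ⬝ᵥ cvec H) • L 1 0 = 0
        simp only [smul_eq_mul]; linear_combination q0
      · show -(L 1 ⬝ᵥ cvec H) • L 0 1 + (L 0 ⬝ᵥ cvec H) • L 1 1 = 0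
        simp only [smul_eq_mul]; linear_combination q1
      · show -(L 1 ⬝ᵥ cvec H) • L 0 2 + (L 0 ⬝ᵥ cvec H) • L 1 2 = 0
        simp only [smul_eq_mul]; linear_combination q2
      · show -(L 1 ⬝ᵥ cvec H) • L 0 3 + (L 0 ⬝ᵥ cvec H) • L 1 3 = 0
        simp only [smul_eq_mul]; linear_combination q3
    have hzero := Fintype.linearIndependent_iff.mp hLind _ hsum
    have hd1 : L 1 ⬝ᵥ cvec H = 0 := by
      have := hzero 0; simpa using this
    have hd0 : L 0 ⬝ᵥ cvec H = 0 := by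
      have := hzero 1; simpa using this
    rw [Submodule.span_le]
    rintro _ ⟨i, rfl⟩
    fin_cases i
    · exact LinearMap.mem_ker.mpr hd0
    · exact LinearMap.mem_ker.mpr hd1
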